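/- Grade-0 identity: let P be a unitary 3×3 complex matrix, let a₁, a₂, a₃ be real numbers with a₁ + a₂ + a₃ = 0, set b_i = (ia_i/2)·P·D_i·Pᴴ and B = b₁ + b₂ + b₃. Then ccos(b₁)·ccos(b₂)·ccos(b₃) = (1/4)·𝟙 + (1/4)·tr(ccos(B))·𝟙. -/

import Mathlib

open Matrix

/-- `ccos M = (exp M + (exp M)ᴴ)/2`. -/
noncomputable def ccos (M : Matrix (Fin 3) (Fin 3) ℂ) : Matrix (Fin 3) (Fin 3) ℂ :=
  (1/2 : ℂ) • (NormedSpace.exp M + (NormedSpace.exp M)ᴴ)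

lemma exp_conj_diag (P : Matrix (Fin 3) (Fin 3) ℂ) (hP : P * Pᴴ = 1) (hP' : Pᴴ * P = 1)
    (v : Fin 3 → ℂ) :
    NormedSpace.exp (P * Matrix.diagonal v * Pᴴ)
      = P * Matrix.diagonal (fun j => Complex.exp (v j)) * Pᴴ := by
  let U : (Matrix (Fin 3) (Fin 3) ℂ)ˣ := ⟨P, Pᴴ, hP, hP'⟩
  have h1 : P = (U : Matrix (Fin 3) (Fin 3) ℂ) := rfl
  have h2 : Pᴴ = ((U⁻¹ : _ˣ) : Matrix (Fin 3) (Fin 3) ℂ) := rfl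
  rw [h1, h2, Matrix.exp_units_conj, Matrix.exp_diagonal]
  rw [Pi.exp_def]
  congr 2
  funext j
  rw [← Complex.exp_eq_exp_ℂ]

lemma ccos_conj_diag (P : Matrix (Fin 3) (Fin 3) ℂ) (hP : P * Pᴴ = 1) (hP' : Pᴴ * P = 1)
    (v : Fin 3 → ℂ) :
    ccos (P * Matrix.diagonal v * Pᴴ)
      = P * Matrix.diagonal
          (fun j => (Complex.exp (v j) + (starRingEnd ℂ) (Complex.exp (v j))) / 2) * Pᴴ := by
  rw [ccos, exp_conj_diag P hP hP']
  have hstar : (P * Matrix.diagonal (fun j => Complex.exp (v j)) * Pᴴ)ᴴ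
      = P * Matrix.diagonal (fun j => (starRingEnd ℂ) (Complex.exp (v j))) * Pᴴ := by
    rw [Matrix.conjTranspose_mul, Matrix.conjTranspose_mul, Matrix.conjTranspose_conjTranspose,
      Matrix.diagonal_conjTranspose, ← Matrix.mul_assoc]
    rfl
  rw [hstar, ← Matrix.add_mul, ← Matrix.mul_add, Matrix.diagonal_add, ← Matrix.smul_mul,
    ← mul_smul_comm, ← Matrix.diagonal_smul]
  refine congrArg (· * Pᴴ) (congrArg (P * ·) (congrArg Matrix.diagonal (funext fun j => ?_)))
  show (1/2 : ℂ) * (Complex.exp (v j) + (starRingEnd ℂ) (Complex.exp (v j))) = _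
  ring

lemma half_entry (t : ℝ) :
    (Complex.exp ((t : ℂ) * Complex.I)
      + (starRingEnd ℂ) (Complex.exp ((t : ℂ) * Complex.I))) / 2 = Complex.cos t := by
  rw [← Complex.exp_conj, _root_.map_mul, Complex.conj_ofReal, Complex.conj_I, Complex.cos]
  ring_nf

lemma key_trig (x y : ℂ) :
    Complex.cos x * Complex.cos y * Complex.cos (x + y)
      = 1/4 + 1/4 * (Complex.cos (2*x) + Complex.cos (2*y) + Complex.cos (2*(x+y))) := by
  rw [Complex.cos_add, Complex.cos_two_mul, Complex.cos_two_mul,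
    show (2*(x+y)) = 2*x + 2*y by ring, Complex.cos_add, Complex.cos_two_mul,
    Complex.cos_two_mul, Complex.sin_two_mul, Complex.sin_two_mul]
  ring

/-- Grade-0 identity: with `P` unitary, `a₁ + a₂ + a₃ = 0`,
`bᵢ = (iaᵢ/2) • P • Dᵢ • Pᴴ` and `B = b₁ + b₂ + b₃`, we have
`ccos b₁ * ccos b₂ * ccos b₃ = (1/4) • 𝟙 + (1/4)tr(ccos B) • 𝟙`. -/
theorem grade_zero_identity
    (P : Matrix (Fin 3) (Fin 3) ℂ) (hP : P * Pᴴ = 1)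
    (a : Fin 3 → ℝ) (hsum : a 0 + a 1 + a 2 = 0)
    (b : Fin 3 → Matrix (Fin 3) (Fin 3) ℂ)
    (hb : ∀ i, b i = ((a i : ℂ) * Complex.I / 2) •
        (P * Matrix.diagonal (fun j => if j = i then (1 : ℂ) else -1) * Pᴴ))
    (B : Matrix (Fin 3) (Fin 3) ℂ) (hB : B = b 0 + b 1 + b 2) :
    ccos (b 0) * ccos (b 1) * ccos (b 2)
      = (1/4 : ℂ) • (1 : Matrix (Fin 3) (Fin 3) ℂ)
        + ((1/4 : ℂ) * (ccos B).trace) • (1 : Matrix (Fin 3) (Fin 3) ℂ) := by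
  have hP' : Pᴴ * P = 1 := mul_eq_one_comm.mp hP
  have hc : ((a 0 : ℂ) + (a 1 : ℂ) + (a 2 : ℂ)) = 0 := by exact_mod_cast hsum
  have hb' : ∀ i, b i = P * Matrix.diagonal
      (fun j => ((a i : ℂ) * Complex.I / 2) * (if j = i then (1:ℂ) else -1)) * Pᴴ := by
    intro i
    rw [hb i, ← Matrix.smul_mul, ← mul_smul_comm, ← Matrix.diagonal_smul]
    rfl
  have hccos_b : ∀ i, ccos (b i) = (Complex.cos ((a i : ℂ) / 2)) • 1 := by
    intro i
    rw [hb' i, ccos_conj_diag P hP hP']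
    have hdiag : (fun j => (Complex.exp ((a i : ℂ) * Complex.I / 2 * (if j = i then (1:ℂ) else -1))
        + (starRingEnd ℂ) (Complex.exp ((a i : ℂ) * Complex.I / 2 * (if j = i then (1:ℂ) else -1)))) / 2)
        = fun _ : Fin 3 => Complex.cos ((a i : ℂ) / 2) := by
      funext j
      by_cases h : j = i
      · rw [if_pos h, show ((a i : ℂ) * Complex.I / 2 * 1) = (a i : ℂ) / 2 * Complex.I by ring]
        have := half_entry (a i / 2)
        push_cast at this
        exact this
      · rw [if_neg h,
          show ((a i : ℂ) * Complex.I / 2 * (-1)) = -((a i : ℂ) / 2) * Complex.I by ring]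
        have := half_entry (-(a i / 2))
        push_cast at this
        rw [Complex.cos_neg] at this
        exact this
    rw [hdiag, ← Matrix.smul_one_eq_diagonal, mul_smul_comm, Matrix.smul_mul,
      Matrix.mul_one, hP]
  have hBdiag : B = P * Matrix.diagonal (fun j => (a j : ℂ) * Complex.I) * Pᴴ := by
    rw [hB, hb' 0, hb' 1, hb' 2, ← Matrix.add_mul, ← Matrix.add_mul, ← Matrix.mul_add,
      ← Matrix.mul_add, Matrix.diagonal_add, Matrix.diagonal_add]
    refine congrArg (· * Pᴴ) (congrArg (P * ·) (congrArg Matrix.diagonal (funext fun j => ?_)))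
    fin_cases j <;> simp <;> linear_combination (-(Complex.I)/2) * hc
  have hccosB : ccos B = P * Matrix.diagonal (fun j => Complex.cos ((a j : ℂ))) * Pᴴ := by
    rw [hBdiag, ccos_conj_diag P hP hP']
    refine congrArg (· * Pᴴ) (congrArg (P * ·) (congrArg Matrix.diagonal (funext fun j => ?_)))
    exact half_entry (a j)
  have htr : (ccos B).trace = Complex.cos ((a 0 : ℂ)) + Complex.cos ((a 1 : ℂ))
      + Complex.cos ((a 2 : ℂ)) := by
    rw [hccosB, Matrix.trace_mul_cycle, hP', Matrix.one_mul,
      Matrix.trace_diagonal]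
    simp [Fin.sum_univ_three]
  rw [hccos_b 0, hccos_b 1, hccos_b 2, htr]
  simp only [Matrix.smul_mul, Matrix.mul_smul, Matrix.one_mul, Matrix.mul_one, smul_smul]
  rw [← add_smul]
  congr 1
  have h2 : (a 2 : ℂ) = -((a 0 : ℂ) + (a 1 : ℂ)) := by linear_combination hc
  rw [h2]
  have hk := key_trig ((a 0 : ℂ)/2) ((a 1 : ℂ)/2)
  rw [show ((a 0:ℂ)/2 + (a 1:ℂ)/2) = ((a 0:ℂ)+(a 1:ℂ))/2 by ring,
    show (2*((a 0:ℂ)/2)) = (a 0:ℂ) by ring, show (2*((a 1:ℂ)/2)) = (a 1:ℂ) by ring,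
    show (2*(((a 0:ℂ)+(a 1:ℂ))/2)) = ((a 0:ℂ)+(a 1:ℂ)) by ring] at hk
  rw [show (-((a 0:ℂ)+(a 1:ℂ))/2) = -(((a 0:ℂ)+(a 1:ℂ))/2) by ring, Complex.cos_neg,
    Complex.cos_neg]
  linear_combination hk
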